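/- Let V be a finite-dimensional real inner product space and Δ a discrete subgroup that is generated by elements each of norm less than c. If Δ is a lattice in its ℝ-span W, then the covolume of Δ in W is at most c^{dim W}. -/

import Mathlib

open Set

open Finset Matrix in
lemma gram_mul {V : Type*} [NormedAddCommGroup V] [InnerProductSpace ℝ V]
    {m : ℕ} (u : Fin m → V) (A : Matrix (Fin m) (Fin m) ℝ) :
    (Matrix.of fun i j => (inner ℝ (∑ k, A k i • u k) (∑ l, A l j • u l) : ℝ))
      = Aᵀ * (Matrix.of fun i j => (inner ℝ (u i) (u j) : ℝ)) * A := by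
  ext i j
  simp only [Matrix.mul_apply, Matrix.of_apply, Matrix.transpose_apply, inner_sum, sum_inner,
    real_inner_smul_left, real_inner_smul_right, Finset.sum_mul, Finset.mul_sum]
  exact Finset.sum_congr rfl fun k _ => Finset.sum_congr rfl fun l _ => by
    rw [real_inner_comm]; ring

open Finset Matrix in
lemma gram_det_pos_and_le {V : Type*} [NormedAddCommGroup V] [InnerProductSpace ℝ V]
    {m : ℕ} (s : Fin m → V) (hs : LinearIndependent ℝ s) :
    0 < (Matrix.of fun i j => (inner ℝ (s i) (s j) : ℝ)).det ∧
    (Matrix.of fun i j => (inner ℝ (s i) (s j) : ℝ)).det ≤ ∏ i, ‖s i‖ ^ 2 := by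
  classical
  haveI : WellFoundedLT (Fin m) := inferInstance
  set g : Fin m → V := fun n : Fin m => InnerProductSpace.gramSchmidt ℝ s n with hg
  have hgo : ∀ {i j : Fin m}, i ≠ j → (inner ℝ (g i) (g j) : ℝ) = 0 :=
    fun h => InnerProductSpace.gramSchmidt_orthogonal ℝ s h
  have hgne : ∀ i, g i ≠ 0 := fun i => InnerProductSpace.gramSchmidt_ne_zero i hs
  set L : Matrix (Fin m) (Fin m) ℝ := Matrix.of fun j i =>
    if j = i then 1 else if j < i then (inner ℝ (g j) (s i) : ℝ) / ‖g j‖ ^ 2 else 0 with hL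
  have hrep : ∀ i, s i = ∑ j, L j i • g j := by
    intro i
    have h1 : ∑ j, L j i • g j = ∑ j ∈ Finset.Iic i, L j i • g j := by
      refine (Finset.sum_subset (Finset.subset_univ _) fun j _ hj => ?_).symm
      rw [Finset.mem_Iic, not_le] at hj
      have h2 : L j i = 0 := by
        simp only [hL, Matrix.of_apply, if_neg hj.ne', if_neg (not_lt.2 hj.le)]
      rw [h2, zero_smul]
    rw [h1, ← Finset.Iio_insert, Finset.sum_insert (by simp)]
    have h3 : L i i = 1 := by simp [hL]
    rw [h3, one_smul]
    have h4 : ∀ j ∈ Finset.Iio i, L j i • g j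
        = ((inner ℝ (g j) (s i) : ℝ) / (‖g j‖ : ℝ) ^ 2) • g j := by
      intro j hj
      rw [Finset.mem_Iio] at hj
      simp only [hL, Matrix.of_apply, if_neg hj.ne, if_pos hj]
    rw [Finset.sum_congr rfl h4]
    exact InnerProductSpace.gramSchmidt_def'' ℝ s i
  have hGs : (Matrix.of fun i j => (inner ℝ (s i) (s j) : ℝ))
      = Lᵀ * (Matrix.of fun i j => (inner ℝ (g i) (g j) : ℝ)) * L := by
    rw [← gram_mul g L]
    ext i j
    simp only [Matrix.of_apply]
    rw [← hrep, ← hrep]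
  have hLtri : L.BlockTriangular id := by
    intro j i hji
    simp only [id] at hji
    simp only [hL, Matrix.of_apply, if_neg (ne_of_gt hji), if_neg (not_lt.2 hji.le)]
  have hLdet : L.det = 1 := by
    rw [Matrix.det_of_upperTriangular hLtri]
    simp [hL]
  have hGgtri : (Matrix.of fun i j => (inner ℝ (g i) (g j) : ℝ)).BlockTriangular id := by
    intro j i hji
    exact hgo (ne_of_gt hji)
  have hGgdet : (Matrix.of fun i j => (inner ℝ (g i) (g j) : ℝ)).det = ∏ i, ‖g i‖ ^ 2 := by
    rw [Matrix.det_of_upperTriangular hGgtri]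
    exact Finset.prod_congr rfl fun i _ => real_inner_self_eq_norm_sq (g i)
  have hdet : (Matrix.of fun i j => (inner ℝ (s i) (s j) : ℝ)).det = ∏ i, ‖g i‖ ^ 2 := by
    rw [hGs, Matrix.det_mul, Matrix.det_mul, Matrix.det_transpose, hLdet, hGgdet]
    ring
  have hnorm : ∀ i, ‖g i‖ ≤ ‖s i‖ := by
    intro i
    have h1 : (inner ℝ (g i) (s i) : ℝ) = ‖g i‖ ^ 2 := by
      rw [hrep i, inner_sum]
      rw [Finset.sum_eq_single i (fun j _ hj => by
        rw [real_inner_smul_right, hgo (Ne.symm hj), mul_zero]) (by simp)]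
      rw [real_inner_smul_right]
      simp [hL, real_inner_self_eq_norm_sq]
    have h2 : ‖g i‖ * ‖g i‖ ≤ ‖g i‖ * ‖s i‖ := by
      rw [← real_inner_self_eq_norm_mul_norm]
      calc (inner ℝ (g i) (g i) : ℝ) = inner ℝ (g i) (s i) := by
            rw [h1, real_inner_self_eq_norm_sq]
        _ ≤ ‖g i‖ * ‖s i‖ := real_inner_le_norm _ _
    exact le_of_mul_le_mul_left h2 (norm_pos_iff.2 (hgne i))
  constructor
  · rw [hdet]
    exact Finset.prod_pos fun i _ => pow_pos (norm_pos_iff.2 (hgne i)) 2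
  · rw [hdet]
    exact Finset.prod_le_prod (fun i _ => by positivity)
      (fun i _ => pow_le_pow_left₀ (norm_nonneg _) (hnorm i) 2)

open Matrix in

/-- Let `V` be a finite-dimensional real inner product space and `Δ = ℤ-span(S)` a
discrete subgroup generated by elements of norm less than `c`. If `Δ` is a lattice in its
ℝ-span `W` (i.e. it has a ℤ-basis of size `m = dim W`), then the covolume of `Δ` in `W`
(the square root of the Gram determinant of a ℤ-basis) is at most `c ^ dim W`. -/
theorem covolume_le_of_small_generators
    {V : Type*} [NormedAddCommGroup V] [InnerProductSpace ℝ V] [FiniteDimensional ℝ V]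
    (c : ℝ) (S : Set V) (hS : ∀ v ∈ S, ‖v‖ < c)
    (hdisc : DiscreteTopology (Submodule.span ℤ S))
    (m : ℕ) (hm : m = Module.finrank ℝ (Submodule.span ℝ S))
    (b : Module.Basis (Fin m) ℤ (Submodule.span ℤ S)) :
    Real.sqrt (Matrix.det (Matrix.of fun i j =>
      (inner ℝ ((b i : V)) ((b j : V)) : ℝ))) ≤ c ^ m := by
  classical
  rcases Nat.eq_zero_or_pos m with hm0 | hmpos
  · subst hm0
    simp [Matrix.det_isEmpty]
  -- choose m linearly independent elements of S
  obtain ⟨s, hsS, hsind⟩ : ∃ s : Fin m → V, (∀ i, s i ∈ S) ∧ LinearIndependent ℝ s := by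
    obtain ⟨t, htS, htspan, htind⟩ := exists_linearIndependent ℝ S
    have htfin : t.Finite := htind.setFinite
    haveI := htfin.fintype
    have hcard : Fintype.card t = m := by
      have hb : Module.Basis t ℝ (Submodule.span ℝ (Set.range ((↑) : t → V))) := Module.Basis.span htind
      rw [Subtype.range_coe] at hb
      rw [← Module.finrank_eq_card_basis hb, hm, htspan]
    let e : Fin m ≃ t := (Fintype.equivFinOfCardEq hcard).symm
    exact ⟨fun i => (e i : V), fun i => htS (e i).2, htind.comp e e.injective⟩
  have hc : 0 < c := lt_of_le_of_lt (norm_nonneg (s ⟨0, hmpos⟩)) (hS _ (hsS _))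
  obtain ⟨hpos, hle⟩ := gram_det_pos_and_le s hsind
  have hsΔ : ∀ i, s i ∈ Submodule.span ℤ S := fun i => Submodule.subset_span (hsS i)
  set M : Matrix (Fin m) (Fin m) ℤ :=
    Matrix.of fun j i => b.repr ⟨s i, hsΔ i⟩ j with hM
  have hrepb : ∀ i, s i = ∑ j, ((M j i : ℤ) : ℝ) • (b j : V) := by
    intro i
    have h0 := b.sum_repr ⟨s i, hsΔ i⟩
    calc s i = ((⟨s i, hsΔ i⟩ : Submodule.span ℤ S) : V) := rfl
      _ = ((∑ j, b.repr ⟨s i, hsΔ i⟩ j • b j : Submodule.span ℤ S) : V) := by rw [h0]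
      _ = ∑ j, ((M j i : ℤ) : ℝ) • (b j : V) := by
          push_cast
          refine Finset.sum_congr rfl fun j _ => ?_
          rw [hM]
          simp [Int.cast_smul_eq_zsmul]
  set N : Matrix (Fin m) (Fin m) ℝ := M.map (Int.cast : ℤ → ℝ) with hN
  have hGs : (Matrix.of fun i j => (inner ℝ (s i) (s j) : ℝ))
      = Nᵀ * (Matrix.of fun i j => (inner ℝ ((b i : V)) ((b j : V)) : ℝ)) * N := by
    rw [← gram_mul (fun j => (b j : V)) N]
    ext i j
    simp only [Matrix.of_apply]
    rw [hrepb i, hrepb j]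
    exact congrArg₂ (fun x y => (inner ℝ x y : ℝ))
      (Finset.sum_congr rfl fun k _ => rfl) (Finset.sum_congr rfl fun k _ => rfl)
  have hNdet : N.det = ((M.det : ℤ) : ℝ) := by
    exact (RingHom.map_det (Int.castRingHom ℝ) M).symm
  have hdeteq : (Matrix.of fun i j => (inner ℝ (s i) (s j) : ℝ)).det
      = ((M.det : ℤ) : ℝ) ^ 2 * (Matrix.of fun i j =>
        (inner ℝ ((b i : V)) ((b j : V)) : ℝ)).det := by
    rw [hGs, Matrix.det_mul, Matrix.det_mul, Matrix.det_transpose, hNdet]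
    ring
  have hM0 : M.det ≠ 0 := by
    intro h
    rw [h] at hdeteq
    simp at hdeteq
    rw [hdeteq] at hpos
    exact lt_irrefl _ hpos
  have h1le : (1 : ℝ) ≤ ((M.det : ℤ) : ℝ) ^ 2 := by
    have h2 : (1 : ℤ) ≤ M.det ^ 2 := by
      rcases hM0.lt_or_gt with h | h <;> nlinarith
    exact_mod_cast h2
  have hGb_le : (Matrix.of fun i j => (inner ℝ ((b i : V)) ((b j : V)) : ℝ)).det
      ≤ (Matrix.of fun i j => (inner ℝ (s i) (s j) : ℝ)).det := by
    nlinarith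
  have hfinal : (Matrix.of fun i j => (inner ℝ ((b i : V)) ((b j : V)) : ℝ)).det
      ≤ (c ^ m) ^ 2 := by
    refine hGb_le.trans (hle.trans ?_)
    calc ∏ i, ‖s i‖ ^ 2 ≤ ∏ _i : Fin m, c ^ 2 :=
          Finset.prod_le_prod (fun i _ => by positivity)
            (fun i _ => pow_le_pow_left₀ (norm_nonneg _) (hS _ (hsS i)).le 2)
      _ = (c ^ m) ^ 2 := by
          rw [Finset.prod_const, Finset.card_univ, Fintype.card_fin, ← pow_mul, ← pow_mul,
            Nat.mul_comm]
  calc Real.sqrt (Matrix.det (Matrix.of fun i j => (inner ℝ ((b i : V)) ((b j : V)) : ℝ)))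
      ≤ Real.sqrt ((c ^ m) ^ 2) := Real.sqrt_le_sqrt hfinal
    _ = c ^ m := Real.sqrt_sq (pow_nonneg hc.le m)
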